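/- Let τ ⊆ γ be faces of a polyhedral cone σ ⊆ R^d. Then the dual of the quotient cone γ/τ := (γ + span(τ))/span(τ), computed inside its own span, is canonically isomorphic (as a cone) to the quotient τ*/γ* of complementary faces of σ^∨: (γ/τ)^∨ ≅ (τ^⊥ ∩ σ^∨ + γ^⊥)/γ^⊥, where τ* = τ^⊥ ∩ σ^∨ and γ* = γ^⊥ ∩ σ^∨. -/

import Mathlib

open scoped Pointwise
open RealInnerProductSpace

/-- The dual cone of a set `S` in Euclidean space. -/
def dualSet {d : ℕ} (S : Set (EuclideanSpace ℝ (Fin d))) : Set (EuclideanSpace ℝ (Fin d)) :=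
  {y | ∀ x ∈ S, 0 ≤ (inner ℝ y x : ℝ)}

/-- The annihilator `S^⊥` of a set `S`. -/
def perpSet {d : ℕ} (S : Set (EuclideanSpace ℝ (Fin d))) : Set (EuclideanSpace ℝ (Fin d)) :=
  {y | ∀ x ∈ S, (inner ℝ y x : ℝ) = 0}

/-- `σ` is a polyhedral cone. -/
def IsPolyCone {d : ℕ} (σ : Set (EuclideanSpace ℝ (Fin d))) : Prop :=
  ∃ (m : ℕ) (g : Fin m → EuclideanSpace ℝ (Fin d)),
    σ = {x | ∃ c : Fin m → ℝ, (∀ i, 0 ≤ c i) ∧ x = ∑ i, c i • g i}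

/-- `γ` is a face of `σ`. -/
def IsFaceOf {d : ℕ} (σ γ : Set (EuclideanSpace ℝ (Fin d))) : Prop :=
  ∃ u ∈ dualSet σ, γ = σ ∩ {x | (inner ℝ u x : ℝ) = 0}

lemma mem_orth_span {d : ℕ} (S : Set (EuclideanSpace ℝ (Fin d)))
    (v : EuclideanSpace ℝ (Fin d)) :
    v ∈ (Submodule.span ℝ S)ᗮ ↔ ∀ x ∈ S, (inner ℝ v x : ℝ) = 0 := by
  rw [Submodule.mem_orthogonal]
  constructor
  · intro h x hx
    rw [real_inner_comm]
    exact h x (Submodule.subset_span hx)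
  · intro h u hu
    induction hu using Submodule.span_induction with
    | mem x hx => rw [real_inner_comm]; exact h x hx
    | zero => simp
    | add x y _ _ hx hy => rw [inner_add_left, hx, hy]; ring
    | smul c x _ hx => rw [inner_smul_left]; simp [hx]

lemma exists_decomp {d : ℕ} {σ γ τ : Set (EuclideanSpace ℝ (Fin d))}
    (hσ : IsPolyCone σ) (hγ : IsFaceOf σ γ) (hτγ : τ ⊆ γ)
    (v : EuclideanSpace ℝ (Fin d)) (hv1 : v ∈ perpSet τ)
    (hv2 : ∀ x ∈ γ, 0 ≤ (inner ℝ v x : ℝ)) :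
    ∃ w ∈ dualSet σ ∩ perpSet τ, v - w ∈ perpSet γ := by
  obtain ⟨m, g, hg⟩ := hσ
  obtain ⟨u, hu, hγeq⟩ := hγ
  have hgen : ∀ i, g i ∈ σ := by
    intro i
    rw [hg]
    refine ⟨fun j => if j = i then 1 else 0, fun j => by positivity, ?_⟩
    simp [ite_smul]
  set c : ℝ := ∑ i, max 0 (-(inner ℝ v (g i) : ℝ) / (inner ℝ u (g i) : ℝ)) with hc
  have hc0 : 0 ≤ c := Finset.sum_nonneg fun i _ => le_max_left _ _
  have hci : ∀ i, max 0 (-(inner ℝ v (g i) : ℝ) / (inner ℝ u (g i) : ℝ)) ≤ c :=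
    fun i => Finset.single_le_sum (f := fun i => max 0 (-(inner ℝ v (g i) : ℝ) / (inner ℝ u (g i) : ℝ)))
      (fun j _ => le_max_left _ _) (Finset.mem_univ i)
  refine ⟨v + c • u, ⟨?_, ?_⟩, ?_⟩
  · -- v + c•u ∈ dualSet σ
    intro x hx
    rw [hg] at hx
    obtain ⟨a, ha, rfl⟩ := hx
    rw [inner_sum]
    refine Finset.sum_nonneg fun i _ => ?_
    rw [real_inner_smul_right]
    refine mul_nonneg (ha i) ?_
    rw [inner_add_left, real_inner_smul_left]
    have hui : 0 ≤ (inner ℝ u (g i) : ℝ) := hu (g i) (hgen i)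
    rcases eq_or_lt_of_le hui with h0 | hpos
    · have : g i ∈ γ := by rw [hγeq]; exact ⟨hgen i, h0.symm⟩
      have := hv2 _ this
      nlinarith
    · have h1 : -(inner ℝ v (g i) : ℝ) / (inner ℝ u (g i) : ℝ) ≤ c :=
        le_trans (le_max_right _ _) (hci i)
      have := (div_le_iff₀ hpos).mp h1
      linarith
  · -- v + c•u ∈ perpSet τ
    intro x hx
    have hxγ : x ∈ γ := hτγ hx
    rw [hγeq] at hxγ
    rw [inner_add_left, real_inner_smul_left, hv1 x hx, hxγ.2]
    ring
  · -- v - (v + c•u) ∈ perpSet γ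
    intro x hx
    rw [hγeq] at hx
    have : v - (v + c • u) = -(c • u) := by module
    rw [this, inner_neg_left, real_inner_smul_left, hx.2]
    ring


set_option maxHeartbeats 1000000 in
/-- Let `τ ⊆ γ` be faces of a polyhedral cone `σ ⊆ ℝ^d`.  The dual of the quotient cone
`γ/τ = (γ + span τ)/span τ`, computed inside its own span (i.e. modulo the functionals
vanishing on `γ/τ`), is canonically isomorphic as a cone to the quotient
`τ*/γ* = (τ^⊥ ∩ σ^∨ + γ^⊥)/γ^⊥` of complementary faces of `σ^∨`:  there is an injective
linear map carrying the one cone bijectively onto the other. -/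
theorem quotient_cone_dual_iso {d : ℕ} (σ τ γ : Set (EuclideanSpace ℝ (Fin d)))
    (hσ : IsPolyCone σ) (hτ : IsFaceOf σ τ) (hγ : IsFaceOf σ γ) (hτγ : τ ⊆ γ) :
    ∃ e : (Module.Dual ℝ (EuclideanSpace ℝ (Fin d) ⧸ Submodule.span ℝ τ) ⧸
        (Submodule.span ℝ ((Submodule.span ℝ τ).mkQ '' γ)).dualAnnihilator) →ₗ[ℝ]
        (EuclideanSpace ℝ (Fin d) ⧸ (Submodule.span ℝ γ)ᗮ),
      Function.Injective e ∧
      e '' ((Submodule.span ℝ ((Submodule.span ℝ τ).mkQ '' γ)).dualAnnihilator.mkQ ''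
          {φ : Module.Dual ℝ (EuclideanSpace ℝ (Fin d) ⧸ Submodule.span ℝ τ) |
            ∀ c ∈ (Submodule.span ℝ τ).mkQ '' γ, 0 ≤ φ c}) =
        ((Submodule.span ℝ γ)ᗮ).mkQ '' (dualSet σ ∩ perpSet τ + perpSet γ) := by
  classical
  set Sτ := Submodule.span ℝ τ with hSτ
  set G := (Submodule.span ℝ γ)ᗮ with hG
  set A := (Submodule.span ℝ (Sτ.mkQ '' γ)).dualAnnihilator with hA
  -- the vector representing φ ∘ mkQ
  have hVc : ∀ φ : Module.Dual ℝ (EuclideanSpace ℝ (Fin d) ⧸ Sτ), ∀ x : EuclideanSpace ℝ (Fin d),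
      (inner ℝ ((InnerProductSpace.toDual ℝ (EuclideanSpace ℝ (Fin d))).symm
        (LinearMap.toContinuousLinearMap (φ.comp Sτ.mkQ))) x : ℝ) = φ (Sτ.mkQ x) := by
    intro φ x
    rw [InnerProductSpace.toDual_symm_apply]
    simp
  set V : Module.Dual ℝ (EuclideanSpace ℝ (Fin d) ⧸ Sτ) →ₗ[ℝ] EuclideanSpace ℝ (Fin d) :=
    { toFun := fun φ => (InnerProductSpace.toDual ℝ (EuclideanSpace ℝ (Fin d))).symm
        (LinearMap.toContinuousLinearMap (φ.comp Sτ.mkQ))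
      map_add' := by
        intro φ ψ
        apply ext_inner_right ℝ
        intro x
        rw [hVc, inner_add_left, hVc, hVc]
        simp
      map_smul' := by
        intro r φ
        apply ext_inner_right ℝ
        intro x
        rw [hVc, real_inner_smul_left, hVc]
        simp } with hV
  have hVapp : ∀ φ (x : EuclideanSpace ℝ (Fin d)), (inner ℝ (V φ) x : ℝ) = φ (Sτ.mkQ x) := fun φ x => hVc φ x
  set F : Module.Dual ℝ (EuclideanSpace ℝ (Fin d) ⧸ Sτ) →ₗ[ℝ] EuclideanSpace ℝ (Fin d) ⧸ G := G.mkQ.comp V with hF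
  have hker : ∀ φ, F φ = 0 ↔ φ ∈ A := by
    intro φ
    have h1 : F φ = 0 ↔ V φ ∈ G := by
      rw [hF]
      simp [Submodule.Quotient.mk_eq_zero]
    rw [h1, hG, mem_orth_span, hA, Submodule.mem_dualAnnihilator]
    constructor
    · intro h w hw
      have : ∀ c ∈ Sτ.mkQ '' γ, φ c = 0 := by
        rintro c ⟨x, hx, rfl⟩
        rw [← hVapp]; exact h x hx
      have hle : Submodule.span ℝ (Sτ.mkQ '' γ) ≤ LinearMap.ker φ :=
        Submodule.span_le.mpr fun c hc => this c hc
      exact hle hw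
    · intro h x hx
      rw [hVapp]
      exact h _ (Submodule.subset_span ⟨x, hx, rfl⟩)
  have hle1 : A ≤ LinearMap.ker F := fun φ hφ => (hker φ).mpr hφ
  refine ⟨A.liftQ F hle1, ?_, ?_⟩
  · rw [← LinearMap.ker_eq_bot]
    exact Submodule.ker_liftQ_eq_bot _ _ _ (fun φ hφ => (hker φ).mp hφ)
  · rw [← Set.image_comp]
    have hcomp : ∀ φ, (A.liftQ F hle1) (A.mkQ φ) = F φ := by
      intro φ; rw [Submodule.mkQ_apply, Submodule.liftQ_apply]
    ext z
    simp only [Set.mem_image, Function.comp_apply]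
    constructor
    · rintro ⟨φ, hφ, rfl⟩
      rw [hcomp]
      have hv1 : V φ ∈ perpSet τ := by
        intro x hx
        rw [hVapp]
        have : Sτ.mkQ x = 0 := by
          rw [Submodule.mkQ_apply, Submodule.Quotient.mk_eq_zero]
          exact Submodule.subset_span hx
        rw [this, map_zero]
      have hv2 : ∀ x ∈ γ, 0 ≤ (inner ℝ (V φ) x : ℝ) := by
        intro x hx
        rw [hVapp]
        exact hφ _ ⟨x, hx, rfl⟩
      obtain ⟨w, hw, hvw⟩ := exists_decomp hσ hγ hτγ (V φ) hv1 hv2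
      refine ⟨V φ, ?_, rfl⟩
      have : V φ = w + (V φ - w) := by module
      rw [this]
      exact Set.add_mem_add hw hvw
    · rintro ⟨y, hy, rfl⟩
      obtain ⟨w, hw, p, hp, rfl⟩ := hy
      have hψle : Sτ ≤ LinearMap.ker (innerₛₗ ℝ w : EuclideanSpace ℝ (Fin d) →ₗ[ℝ] ℝ) := by
        rw [hSτ, Submodule.span_le]
        intro x hx
        simp only [SetLike.mem_coe, LinearMap.mem_ker, innerₛₗ_apply_apply]
        exact hw.2 x hx
      set φ : Module.Dual ℝ (EuclideanSpace ℝ (Fin d) ⧸ Sτ) := Sτ.liftQ (innerₛₗ ℝ w) hψle with hφdef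
      have hφmk : ∀ x : EuclideanSpace ℝ (Fin d), φ (Sτ.mkQ x) = (inner ℝ w x : ℝ) := by
        intro x; rw [Submodule.mkQ_apply, hφdef, Submodule.liftQ_apply]; rfl
      refine ⟨φ, ?_, ?_⟩
      · rintro c ⟨x, hx, rfl⟩
        rw [hφmk]
        have hγσ : γ ⊆ σ := by
          obtain ⟨u, _, hγeq⟩ := hγ
          rw [hγeq]; exact Set.inter_subset_left
        exact hw.1 x (hγσ hx)
      · rw [hcomp]
        have hVφ : V φ = w := by
          apply ext_inner_right ℝ
          intro x
          rw [hVapp, hφmk]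
        rw [hF]
        simp only [LinearMap.comp_apply, hVφ]
        have hpG : p ∈ G := by
          rw [hG, mem_orth_span]; exact hp
        rw [Submodule.mkQ_apply, Submodule.mkQ_apply, Submodule.Quotient.eq]
        simpa using (G.neg_mem hpG)
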